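/- arXiv:2405.13994 — 6 statements merged into one kernel-verified Lean document; each statement's English description precedes it below -/
import Mathlib

section
/- Let f be a non-negative submodular function on finite ground set N, let k ≥ 1, let ε ∈ (0,1), and let S, OPT ⊆ N with |OPT \ S| ≤ k. If for every u ∈ N \ S it holds that (1 + ε/k)·f(S) > f(S ∪ {u}), then f(S) ≥ f(S ∪ OPT)/(1 + ε). -/
lemma submod_union_bound {N : Type*} [DecidableEq N] (f : Finset N → ℝ)
    (hsub : ∀ S T : Finset N, f (S ∪ T) + f (S ∩ T) ≤ f S + f T)
    (S : Finset N) : ∀ T : Finset N,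
    f (S ∪ T) ≤ f S + ∑ u ∈ T \ S, (f (insert u S) - f S) := by
  intro T
  induction T using Finset.induction_on with
  | empty => simp
  | insert _ _ ha ih =>
    rename_i a T
    by_cases haS : a ∈ S
    · have h1 : S ∪ insert a T = S ∪ T := by
        ext x; simp only [Finset.mem_union, Finset.mem_insert]
        constructor
        · rintro (h | rfl | h) <;> tauto
        · tauto
      have h2 : insert a T \ S = T \ S := by
        ext x; simp only [Finset.mem_sdiff, Finset.mem_insert]
        constructor
        · rintro ⟨rfl | h, hx⟩ <;> tauto
        · tauto
      rw [h1, h2]; exact ih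
    · have h2 : insert a T \ S = insert a (T \ S) := by
        ext x; simp only [Finset.mem_sdiff, Finset.mem_insert]
        constructor
        · rintro ⟨rfl | h, hx⟩
          exacts [Or.inl rfl, Or.inr ⟨h, hx⟩]
        · rintro (rfl | ⟨h, hx⟩)
          exacts [⟨Or.inl rfl, haS⟩, ⟨Or.inr h, hx⟩]
      have hanT : a ∉ T \ S := fun h => ha (Finset.mem_sdiff.mp h).1
      rw [h2, Finset.sum_insert hanT]
      have hkey := hsub (S ∪ T) (insert a S)
      have hu : (S ∪ T) ∪ insert a S = S ∪ insert a T := by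
        ext x; simp only [Finset.mem_union, Finset.mem_insert]; tauto
      have hi : (S ∪ T) ∩ insert a S = S := by
        ext x
        simp only [Finset.mem_inter, Finset.mem_union, Finset.mem_insert]
        constructor
        · rintro ⟨h1 | h1, rfl | h2⟩
          · exact absurd h1 haS
          · exact h2
          · exact absurd h1 ha
          · exact h2
        · tauto
      rw [hu, hi] at hkey
      linarith

theorem stmt_3 {N : Type*} [Fintype N] [DecidableEq N] (f : Finset N → ℝ)
    (hsub : ∀ S T : Finset N, f (S ∪ T) + f (S ∩ T) ≤ f S + f T)
    (hnonneg : ∀ S : Finset N, 0 ≤ f S)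
    (k : ℕ) (hk : 1 ≤ k) (ε : ℝ) (hε : 0 < ε ∧ ε < 1)
    (S OPT : Finset N) (hcard : (OPT \ S).card ≤ k)
    (hloc : ∀ u : N, u ∉ S → (1 + ε / k) * f S > f (insert u S)) :
    f S ≥ f (S ∪ OPT) / (1 + ε) := by
  obtain ⟨hε0, hε1⟩ := hε
  have hk0 : (0:ℝ) < k := by exact_mod_cast Nat.lt_of_lt_of_le Nat.zero_lt_one hk
  have hbound := submod_union_bound f hsub S OPT
  have hterm : ∀ u ∈ OPT \ S, f (insert u S) - f S ≤ (ε / k) * f S := by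
    intro u hu
    have huS : u ∉ S := (Finset.mem_sdiff.mp hu).2
    have := hloc u huS
    nlinarith
  have hsum : ∑ u ∈ OPT \ S, (f (insert u S) - f S) ≤ (OPT \ S).card * ((ε / k) * f S) := by
    calc ∑ u ∈ OPT \ S, (f (insert u S) - f S) ≤ ∑ u ∈ OPT \ S, (ε / k) * f S :=
          Finset.sum_le_sum hterm
      _ = (OPT \ S).card * ((ε / k) * f S) := by rw [Finset.sum_const, nsmul_eq_mul]
  have hcard' : ((OPT \ S).card : ℝ) ≤ k := by exact_mod_cast hcard
  have hfS := hnonneg S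
  have hεk : 0 ≤ (ε / k) * f S := by positivity
  have h1 : f (S ∪ OPT) ≤ (1 + ε) * f S := by
    have : ((OPT \ S).card : ℝ) * ((ε / k) * f S) ≤ k * ((ε / k) * f S) :=
      mul_le_mul_of_nonneg_right hcard' hεk
    have hk' : (k:ℝ) * ((ε / k) * f S) = ε * f S := by field_simp
    nlinarith
  rw [ge_iff_le, div_le_iff₀ (by linarith)]
  linarith
end

section
/- Let f be a non-negative submodular function on finite ground set N, let k ≥ 1, let ε ∈ (0,1), and let S, OPT ⊆ N with |S \ OPT| ≤ k. If for every v ∈ S it holds that (1 + ε/k)·f(S) > f(S \ {v}), then f(S) ≥ f(S ∩ OPT)/(1 + ε). -/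
theorem stmt_4 {N : Type*} [Fintype N] [DecidableEq N] (f : Finset N → ℝ)
    (hsub : ∀ S T : Finset N, f (S ∪ T) + f (S ∩ T) ≤ f S + f T)
    (hnonneg : ∀ S : Finset N, 0 ≤ f S)
    (k : ℕ) (hk : 1 ≤ k) (ε : ℝ) (hε : 0 < ε ∧ ε < 1)
    (S OPT : Finset N) (hcard : (S \ OPT).card ≤ k)
    (hloc : ∀ v ∈ S, (1 + ε / k) * f S > f (S.erase v)) :
    f S ≥ f (S ∩ OPT) / (1 + ε) := by
  obtain ⟨hε0, hε1⟩ := hε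
  have hkpos : (0:ℝ) < k := by exact_mod_cast hk
  obtain ⟨c, hc⟩ : ∃ c : ℝ, c = ε / k * f S := ⟨_, rfl⟩
  have hc0 : 0 ≤ c := hc ▸ mul_nonneg (le_of_lt (div_pos hε0 hkpos)) (hnonneg S)
  have hstep : ∀ v ∈ S, f (S.erase v) - f S < c := by
    intro v hv
    have := hloc v hv
    rw [hc]; nlinarith [this]
  -- main induction
  have key : ∀ T : Finset N, T ⊆ S → f (S \ T) - f S ≤ T.card * c := by
    intro T
    induction T using Finset.induction_on with
    | empty => intro _; simp
    | insert _ _ hvT ih =>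
      rename_i v T'
      intro hsub'
      have hvS : v ∈ S := hsub' (Finset.mem_insert_self v T')
      have hT'S : T' ⊆ S := fun x hx => hsub' (Finset.mem_insert_of_mem hx)
      have h1 : f S + f (S \ insert v T') ≤ f (S.erase v) + f (S \ T') := by
        have h := hsub (S.erase v) (S \ T')
        have hu : S.erase v ∪ (S \ T') = S := by
          ext x
          simp only [Finset.mem_union, Finset.mem_erase, Finset.mem_sdiff]
          constructor
          · rintro (⟨_, h⟩ | ⟨h, _⟩) <;> exact h
          · intro hx
            by_cases hxv : x = v
            · right; exact ⟨hx, fun hxT => hvT (hxv ▸ hxT)⟩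
            · left; exact ⟨hxv, hx⟩
        have hi : S.erase v ∩ (S \ T') = S \ insert v T' := by
          ext x
          simp only [Finset.mem_inter, Finset.mem_erase, Finset.mem_sdiff,
            Finset.mem_insert]
          tauto
        rw [hu, hi] at h
        exact h
      have h2 := hstep v hvS
      have h3 := ih hT'S
      have hcard' : (insert v T').card = T'.card + 1 := Finset.card_insert_of_notMem hvT
      rw [hcard']
      push_cast
      nlinarith
  have hmain := key (S \ OPT) (Finset.sdiff_subset)
  have hdd : S \ (S \ OPT) = S ∩ OPT := Finset.sdiff_sdiff_self_left S OPT
  rw [hdd] at hmain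
  have hmc : ((S \ OPT).card : ℝ) * c ≤ (k:ℝ) * c := by
    apply mul_le_mul_of_nonneg_right _ hc0
    exact_mod_cast hcard
  have hkc : (k:ℝ) * c = ε * f S := by
    rw [hc]; field_simp
  have : f (S ∩ OPT) ≤ (1 + ε) * f S := by nlinarith
  rw [ge_iff_le, div_le_iff₀ (by linarith)]
  linarith
end

section
/- Let f be a non-negative submodular function on finite ground set N, let ε ∈ (0,1), k ≥ 1, and let S, OPT ⊆ N be sets with |S \ OPT| = |OPT \ S| ≤ k, both nonempty. If for every u ∈ N \ S and v ∈ S it holds that (1 + ε/k)·f(S) ≥ f((S \ {v}) ∪ {u}), and for every v ∈ S it holds that (1 + ε/k)·f(S) > f(S \ {v}), then f(S) ≥ (f(S ∪ OPT) + f(S ∩ OPT))/(2 + ε). -/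
theorem stmt_5 {N : Type*} [Fintype N] [DecidableEq N] (f : Finset N → ℝ)
    (hsub : ∀ S T : Finset N, f (S ∪ T) + f (S ∩ T) ≤ f S + f T)
    (hnonneg : ∀ S : Finset N, 0 ≤ f S)
    (ε : ℝ) (hε : 0 < ε ∧ ε < 1) (k : ℕ) (hk : 1 ≤ k)
    (S OPT : Finset N)
    (hcardeq : (S \ OPT).card = (OPT \ S).card)
    (hcardle : (OPT \ S).card ≤ k)
    (hne1 : (S \ OPT).Nonempty) (hne2 : (OPT \ S).Nonempty)
    (hswap : ∀ u : N, u ∉ S → ∀ v ∈ S, (1 + ε / k) * f S ≥ f (insert u (S.erase v)))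
    (hdel : ∀ v ∈ S, (1 + ε / k) * f S > f (S.erase v)) :
    f S ≥ (f (S ∪ OPT) + f (S ∩ OPT)) / (2 + ε) := by
  obtain ⟨hε0, hε1⟩ := hε
  have hkpos : (0:ℝ) < (k:ℝ) := by
    have : 0 < k := by omega
    exact_mod_cast this
  -- Lemma 1: union bound
  have L1 : ∀ (T : Finset N), f (S ∪ T) ≤ f S + ∑ b ∈ T, (f (insert b S) - f S) := by
    intro T
    induction T using Finset.induction_on with
    | empty => simp
    | @insert b T hb ih =>
      have hX : (S ∪ T) ∪ insert b S = S ∪ insert b T := by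
        ext x
        simp only [Finset.mem_union, Finset.mem_insert]
        tauto
      have hY : (S ∪ T) ∩ insert b S = S := by
        ext x
        simp only [Finset.mem_inter, Finset.mem_union, Finset.mem_insert]
        constructor
        · rintro ⟨h1, h2⟩
          rcases h2 with rfl | h2
          · rcases h1 with h1 | h1
            · exact h1
            · exact absurd h1 hb
          · exact h2
        · intro h
          exact ⟨Or.inl h, Or.inr h⟩
      have hs := hsub (S ∪ T) (insert b S)
      rw [hX, hY] at hs
      rw [Finset.sum_insert hb]
      linarith
  -- Lemma 2: intersection bound
  have L2 : ∀ (T : Finset N), f (S \ T) ≤ f S + ∑ a ∈ T, (f (S.erase a) - f S) := by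
    intro T
    induction T using Finset.induction_on with
    | empty => simp
    | @insert b T hb ih =>
      have hX : (S \ T) ∪ S.erase b = S := by
        ext x
        simp only [Finset.mem_union, Finset.mem_sdiff, Finset.mem_erase]
        constructor
        · rintro (⟨h1, _⟩ | ⟨_, h2⟩) <;> assumption
        · intro hx
          by_cases hxT : x ∈ T
          · exact Or.inr ⟨fun h => hb (h ▸ hxT), hx⟩
          · exact Or.inl ⟨hx, hxT⟩
      have hY : (S \ T) ∩ S.erase b = S \ insert b T := by
        ext x
        simp only [Finset.mem_inter, Finset.mem_sdiff, Finset.mem_erase,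
          Finset.mem_insert]
        tauto
      have hs := hsub (S \ T) (S.erase b)
      rw [hX, hY] at hs
      rw [Finset.sum_insert hb]
      linarith
  set A := S \ OPT with hA
  set B := OPT \ S with hB
  have e : {x // x ∈ A} ≃ {x // x ∈ B} := Finset.equivOfCardEq hcardeq
  have key : ∀ a : {x // x ∈ A},
      (f (insert ((e a : N)) S) - f S) + (f (S.erase (a : N)) - f S) ≤ ε / k * f S := by
    intro a
    have haS : (a : N) ∈ S := (Finset.mem_sdiff.mp a.2).1
    have hbS : ((e a : N)) ∉ S := (Finset.mem_sdiff.mp (e a).2).2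
    have hswap' := hswap _ hbS _ haS
    have hs := hsub (insert (e a : N) (S.erase (a : N))) S
    have hU : insert (e a : N) (S.erase (a : N)) ∪ S = insert (e a : N) S := by
      rw [Finset.insert_union, Finset.union_eq_right.mpr (Finset.erase_subset _ _)]
    have hI : insert (e a : N) (S.erase (a : N)) ∩ S = S.erase (a : N) := by
      rw [Finset.insert_inter_of_notMem hbS,
        Finset.inter_eq_left.mpr (Finset.erase_subset _ _)]
    rw [hU, hI] at hs
    nlinarith [hnonneg S]
  have hsumB : ∑ b ∈ B, (f (insert b S) - f S)
      = ∑ a : {x // x ∈ A}, (f (insert ((e a : N)) S) - f S) := by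
    rw [← Finset.sum_coe_sort B (fun b => f (insert b S) - f S)]
    exact (Equiv.sum_comp e (fun b : {x // x ∈ B} => f (insert (b : N) S) - f S)).symm
  have hsumA : ∑ a ∈ A, (f (S.erase a) - f S)
      = ∑ a : {x // x ∈ A}, (f (S.erase (a : N)) - f S) :=
    (Finset.sum_coe_sort A (fun a => f (S.erase a) - f S)).symm
  have hcardA : (A.card : ℝ) ≤ (k : ℝ) := by
    rw [hcardeq]; exact_mod_cast hcardle
  have hsum : ∑ b ∈ B, (f (insert b S) - f S) + ∑ a ∈ A, (f (S.erase a) - f S)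
      ≤ ε * f S := by
    rw [hsumB, hsumA, ← Finset.sum_add_distrib]
    calc ∑ a : {x // x ∈ A},
          ((f (insert ((e a : N)) S) - f S) + (f (S.erase (a : N)) - f S))
        ≤ ∑ _a : {x // x ∈ A}, ε / k * f S := Finset.sum_le_sum (fun a _ => key a)
      _ = (A.card : ℝ) * (ε / k * f S) := by
          rw [Finset.sum_const, Finset.card_univ, Fintype.card_coe, nsmul_eq_mul]
      _ ≤ (k : ℝ) * (ε / k * f S) := by
          apply mul_le_mul_of_nonneg_right hcardA
          exact mul_nonneg (by positivity) (hnonneg S)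
      _ = ε * f S := by field_simp
  have h1 := L1 B
  have h2 := L2 A
  rw [hB, Finset.union_sdiff_self_eq_union] at h1
  rw [hA, Finset.sdiff_sdiff_self_left] at h2
  rw [ge_iff_le, div_le_iff₀ (by linarith : (0:ℝ) < 2 + ε)]
  nlinarith [hnonneg S]
end

section
/- Let f : 2^N → ℝ be a submodular function on a finite ground set N with Lovász extension f̂. Then for every x ∈ [0,1]^N and every random subset D ⊆ N whose marginals agree with x (i.e., P[u ∈ D] = x_u for every u ∈ N), we have f̂(x) ≤ E[f(D)]. -/
open MeasureTheory
open scoped Classical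

theorem stmt_8 {N : Type*} [Fintype N] (f : Finset N → ℝ)
    (hsub : ∀ S T : Finset N, f (S ∪ T) + f (S ∩ T) ≤ f S + f T)
    (x : N → ℝ) (hx : ∀ u, 0 ≤ x u ∧ x u ≤ 1)
    {Ω : Type*} [MeasurableSpace Ω] (μ : Measure Ω) [IsProbabilityMeasure μ]
    (D : Ω → Finset N)
    (hDmeas : ∀ s : Finset N, MeasurableSet {ω | D ω = s})
    (hmarg : ∀ u : N, (μ {ω | u ∈ D ω}).toReal = x u) :
    ∫ l in (0:ℝ)..1, f (Finset.univ.filter (fun u => l ≤ x u)) ≤ ∫ ω, f (D ω) ∂μ := by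
  classical
  set n := Fintype.card N with hn
  -- a bijection enumerating N in order of decreasing x-value
  obtain ⟨g, hgbij, hanti⟩ : ∃ g : Fin n → N, Function.Bijective g ∧ Antitone (x ∘ g) := by
    set e := (Fintype.equivFin N).symm with he
    set σ := Tuple.sort (fun i => -x (e i)) with hσ
    refine ⟨fun i => e (σ i), e.bijective.comp σ.bijective, ?_⟩
    intro i j hij
    have hm := Tuple.monotone_sort (fun i => -x (e i)) hij
    simp only [Function.comp_apply] at hm ⊢
    linarith [hm]
  have hginj := hgbij.injective
  -- the chain of prefix sets
  set S : ℕ → Finset N := fun k => (Finset.univ.filter fun i : Fin n => (i : ℕ) < k).image g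
    with hS
  have hmemS : ∀ (i : Fin n) (k : ℕ), g i ∈ S k ↔ (i : ℕ) < k := by
    intro i k
    rw [hS]
    constructor
    · intro h
      obtain ⟨j, hj, hji⟩ := Finset.mem_image.mp h
      cases hginj hji
      simpa using hj
    · intro h
      exact Finset.mem_image.mpr ⟨i, by simpa using h, rfl⟩
  have hS0 : S 0 = ∅ := by
    rw [hS]; simp
  have hSn : S n = Finset.univ := by
    have h1 : (Finset.univ.filter fun i : Fin n => (i : ℕ) < n) = Finset.univ := by
      ext i; simp [i.isLt]
    simp only [hS, h1]
    ext u
    obtain ⟨i, rfl⟩ := hgbij.surjective u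
    simp
  have hSsucc : ∀ i : Fin n, S ((i : ℕ) + 1) = insert (g i) (S (i : ℕ)) := by
    intro i
    have h1 : (Finset.univ.filter fun j : Fin n => (j : ℕ) < (i : ℕ) + 1)
        = insert i (Finset.univ.filter fun j : Fin n => (j : ℕ) < (i : ℕ)) := by
      ext j
      simp only [Finset.mem_filter, Finset.mem_univ, true_and, Finset.mem_insert, Fin.ext_iff]
      omega
    simp only [hS, h1, Finset.image_insert]
  -- pointwise identity for the integrand
  have key : ∀ l : ℝ, f (Finset.univ.filter fun u => l ≤ x u)
      = f ∅ + ∑ i : Fin n,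
          (if l ≤ x (g i) then f (S ((i : ℕ) + 1)) - f (S (i : ℕ)) else 0) := by
    intro l
    set k := (Finset.univ.filter fun i : Fin n => l ≤ x (g i)).card with hk
    have hkn : k ≤ n := by
      calc k ≤ (Finset.univ : Finset (Fin n)).card := Finset.card_filter_le _ _
        _ = n := by simp
    have hpref : ∀ i : Fin n, (l ≤ x (g i)) ↔ (i : ℕ) < k := by
      intro i
      constructor
      · intro h
        have hsub2 : Finset.Iic i ⊆ Finset.univ.filter fun j : Fin n => l ≤ x (g j) := by
          intro j hj
          simp only [Finset.mem_Iic] at hj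
          simp only [Finset.mem_filter, Finset.mem_univ, true_and]
          exact le_trans h (hanti hj)
        have hcard := Finset.card_le_card hsub2
        rw [Fin.card_Iic] at hcard
        omega
      · intro h
        by_contra hne
        have hsub2 : (Finset.univ.filter fun j : Fin n => l ≤ x (g j)) ⊆ Finset.Iio i := by
          intro j hj
          simp only [Finset.mem_filter, Finset.mem_univ, true_and] at hj
          simp only [Finset.mem_Iio]
          by_contra hji
          push_neg at hji
          exact hne (le_trans hj (hanti hji))
        have hcard := Finset.card_le_card hsub2
        rw [Fin.card_Iio] at hcard
        omega
    have hfilter : (Finset.univ.filter fun u => l ≤ x u) = S k := by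
      ext u
      obtain ⟨i, rfl⟩ := hgbij.surjective u
      simp only [Finset.mem_filter, Finset.mem_univ, true_and, hmemS]
      exact hpref i
    rw [hfilter]
    have hsum : (∑ i : Fin n,
          (if l ≤ x (g i) then f (S ((i : ℕ) + 1)) - f (S (i : ℕ)) else 0))
        = ∑ m ∈ Finset.range k, (f (S (m + 1)) - f (S m)) := by
      have h1 : (∑ i : Fin n,
            (if l ≤ x (g i) then f (S ((i : ℕ) + 1)) - f (S (i : ℕ)) else 0))
          = ∑ i : Fin n,
            (if (i : ℕ) < k then f (S ((i : ℕ) + 1)) - f (S (i : ℕ)) else 0) := by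
        refine Finset.sum_congr rfl fun i _ => ?_
        simp only [hpref i]
      rw [h1,
        Fin.sum_univ_eq_sum_range (fun m => if m < k then f (S (m + 1)) - f (S m) else 0) n,
        ← Finset.sum_filter]
      congr 1
      ext m
      simp only [Finset.mem_filter, Finset.mem_range]
      omega
    rw [hsum, Finset.sum_range_sub (fun m => f (S m)) k, hS0]
    ring
  -- greedy lemma: the linear lower bound is below f everywhere
  have greedy : ∀ T : Finset N,
      f ∅ + ∑ i : Fin n,
        (if g i ∈ T then f (S ((i : ℕ) + 1)) - f (S (i : ℕ)) else 0) ≤ f T := by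
    intro T
    have step : ∀ i : Fin n,
        (if g i ∈ T then f (S ((i : ℕ) + 1)) - f (S (i : ℕ)) else 0)
          ≤ f (T ∩ S ((i : ℕ) + 1)) - f (T ∩ S (i : ℕ)) := by
      intro i
      by_cases hi : g i ∈ T
      · rw [if_pos hi]
        have h1 : S (i : ℕ) ∪ (T ∩ S ((i : ℕ) + 1)) = S ((i : ℕ) + 1) := by
          rw [hSsucc i]
          ext u
          by_cases hu : u = g i <;>
            simp [hu, hi]
        have h2 : S (i : ℕ) ∩ (T ∩ S ((i : ℕ) + 1)) = T ∩ S (i : ℕ) := by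
          rw [hSsucc i]
          ext u
          simp only [Finset.mem_inter, Finset.mem_insert]
          tauto
        have h3 := hsub (S (i : ℕ)) (T ∩ S ((i : ℕ) + 1))
        rw [h1, h2] at h3
        linarith
      · rw [if_neg hi]
        have h1 : T ∩ S ((i : ℕ) + 1) = T ∩ S (i : ℕ) := by
          rw [hSsucc i]
          ext u
          simp only [Finset.mem_inter, Finset.mem_insert]
          constructor
          · rintro ⟨hT, rfl | hS'⟩
            · exact absurd hT hi
            · exact ⟨hT, hS'⟩
          · rintro ⟨hT, hS'⟩; exact ⟨hT, Or.inr hS'⟩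
        rw [h1]
        simp
    have hsum2 : (∑ i : Fin n, (f (T ∩ S ((i : ℕ) + 1)) - f (T ∩ S (i : ℕ))))
        = f T - f ∅ := by
      rw [Fin.sum_univ_eq_sum_range (fun m => f (T ∩ S (m + 1)) - f (T ∩ S m)) n,
        Finset.sum_range_sub (fun m => f (T ∩ S m)) n, hS0, hSn,
        Finset.inter_univ, Finset.inter_empty]
    have := Finset.sum_le_sum (fun i (_ : i ∈ Finset.univ) => step i)
    rw [hsum2] at this
    linarith
  -- measurability of the marginal events
  have hM : ∀ u : N, MeasurableSet {ω | u ∈ D ω} := by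
    intro u
    have h1 : {ω | u ∈ D ω} = ⋃ s ∈ {s : Finset N | u ∈ s}, {ω | D ω = s} := by
      ext ω
      simp only [Set.mem_setOf_eq, Set.mem_iUnion]
      constructor
      · intro h; exact ⟨D ω, h, rfl⟩
      · rintro ⟨s, hs, hDs⟩; rw [hDs]; exact hs
    rw [h1]
    exact MeasurableSet.biUnion (Set.to_countable _) fun s _ => hDmeas s
  -- abbreviation
  set W : Fin n → ℝ := fun i => f (S ((i : ℕ) + 1)) - f (S (i : ℕ)) with hW
  -- compute the left-hand side
  have hii : ∀ i : Fin n,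
      IntervalIntegrable (fun l => if l ≤ x (g i) then W i else 0) volume 0 1 := by
    intro i
    have h1 : (fun l : ℝ => if l ≤ x (g i) then W i else 0)
        = Set.indicator (Set.Iic (x (g i))) (fun _ => W i) := by
      funext l
      simp [Set.indicator_apply]
    rw [h1]
    have h2 : IntegrableOn (fun _ : ℝ => W i) (Set.Ioc (0 : ℝ) 1) volume :=
      (integrableOn_const_iff).mpr (Or.inr measure_Ioc_lt_top)
    constructor
    · exact h2.indicator measurableSet_Iic
    · simp [Set.Ioc_eq_empty (by norm_num : ¬ (1:ℝ) < 0)]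
  have hLHS : (∫ l in (0:ℝ)..1, f (Finset.univ.filter fun u => l ≤ x u))
      = f ∅ + ∑ i : Fin n, W i * x (g i) := by
    have hcongr : (∫ l in (0:ℝ)..1, f (Finset.univ.filter fun u => l ≤ x u))
        = ∫ l in (0:ℝ)..1, (f ∅ + ∑ i : Fin n, (if l ≤ x (g i) then W i else 0)) := by
      refine intervalIntegral.integral_congr fun l _ => ?_
      exact key l
    have hsumInt : IntervalIntegrable
        (fun l => ∑ i : Fin n, (if l ≤ x (g i) then W i else 0)) volume 0 1 := by
      have h := IntervalIntegrable.sum (μ := volume) (a := 0) (b := 1)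
        (Finset.univ : Finset (Fin n)) (fun i _ => hii i)
      have he : (∑ i : Fin n, fun l : ℝ => if l ≤ x (g i) then W i else 0)
          = fun l : ℝ => ∑ i : Fin n, (if l ≤ x (g i) then W i else 0) := by
        funext l; simp
      rwa [he] at h
    rw [hcongr, intervalIntegral.integral_add (intervalIntegrable_const) hsumInt,
      intervalIntegral.integral_finset_sum fun i _ => hii i,
      intervalIntegral.integral_const]
    have hterm : ∀ i : Fin n,
        (∫ l in (0:ℝ)..1, (if l ≤ x (g i) then W i else 0)) = W i * x (g i) := by
      intro i
      have h1 : (fun l : ℝ => if l ≤ x (g i) then W i else 0)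
          = Set.indicator {l : ℝ | l ≤ x (g i)} (fun _ => W i) := by
        funext l
        simp [Set.indicator_apply]
      rw [h1, intervalIntegral.integral_indicator
          (Set.mem_Icc.mpr ⟨(hx (g i)).1, (hx (g i)).2⟩),
        intervalIntegral.integral_const]
      rw [smul_eq_mul, sub_zero, mul_comm]
    simp only [hterm]
    simp
  -- integrability on ω side
  have hintD : Integrable (fun ω => f (D ω)) μ := by
    have h1 : (fun ω => f (D ω))
        = fun ω => ∑ s : Finset N, Set.indicator {ω' | D ω' = s} (fun _ => f s) ω := by
      funext ω
      simp only [Set.indicator_apply, Set.mem_setOf_eq]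
      rw [Finset.sum_ite_eq Finset.univ (D ω) f]
      simp
    rw [h1]
    exact integrable_finset_sum _ fun s _ => (integrable_const (f s)).indicator (hDmeas s)
  have hlowind : ∀ i : Fin n, (fun ω => if g i ∈ D ω then W i else 0)
      = fun ω => Set.indicator {ω' | g i ∈ D ω'} (fun _ => W i) ω := by
    intro i
    funext ω
    simp [Set.indicator_apply]
  have hintlow : Integrable
      (fun ω => f ∅ + ∑ i : Fin n, (if g i ∈ D ω then W i else 0)) μ := by
    refine (integrable_const (f ∅)).add ?_
    refine integrable_finset_sum _ fun i _ => ?_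
    rw [hlowind i]
    exact (integrable_const (W i)).indicator (hM (g i))
  -- compare
  have hmono : (∫ ω, (f ∅ + ∑ i : Fin n, (if g i ∈ D ω then W i else 0)) ∂μ)
      ≤ ∫ ω, f (D ω) ∂μ :=
    integral_mono hintlow hintD fun ω => greedy (D ω)
  have hlowval : (∫ ω, (f ∅ + ∑ i : Fin n, (if g i ∈ D ω then W i else 0)) ∂μ)
      = f ∅ + ∑ i : Fin n, W i * x (g i) := by
    rw [integral_add (integrable_const (f ∅))
        (integrable_finset_sum _ fun i _ => by
          rw [hlowind i]; exact (integrable_const (W i)).indicator (hM (g i))),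
      integral_const,
      integral_finset_sum _ fun i _ => by
        rw [hlowind i]; exact (integrable_const (W i)).indicator (hM (g i))]
    have hterm : ∀ i : Fin n,
        (∫ ω, (if g i ∈ D ω then W i else 0) ∂μ) = W i * x (g i) := by
      intro i
      rw [hlowind i, integral_indicator_const (W i) (hM (g i)), smul_eq_mul,
        measureReal_def, hmarg (g i), mul_comm]
    simp only [hterm]
    simp
  rw [hLHS, ← hlowval]
  exact hmono
end

section
/- For every real t_s ∈ [0,1] and integer k ≥ 1, setting α = 1 − 1/k, it holds that ((k − ⌈t_s·k⌉)/k)·α^{k − ⌈t_s·k⌉ − 1} + α^{k − ⌈t_s·k⌉} − α^k ≥ (2 − t_s − e^{−t_s})·e^{t_s − 1} − 3/k. -/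
set_option maxHeartbeats 1000000 in
theorem stmt_10 (t_s : ℝ) (ht : 0 ≤ t_s ∧ t_s ≤ 1) (k : ℕ) (hk : 1 ≤ k)
    (α : ℝ) (hα : α = 1 - 1 / k) :
    ((k : ℝ) - ⌈t_s * k⌉₊) / k * α ^ (k - ⌈t_s * (k : ℝ)⌉₊ - 1)
      + α ^ (k - ⌈t_s * (k : ℝ)⌉₊) - α ^ k
    ≥ (2 - t_s - Real.exp (-t_s)) * Real.exp (t_s - 1) - 3 / k := by
  obtain ⟨ht0, ht1⟩ := ht
  have hk0 : (0:ℝ) < k := by exact_mod_cast hk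
  set m := ⌈t_s * (k:ℝ)⌉₊ with hm
  have htk0 : 0 ≤ t_s * k := by positivity
  have hmk : m ≤ k := Nat.ceil_le.2 (by nlinarith)
  have hm1 : (m:ℝ) ≤ t_s * k + 1 := le_of_lt (Nat.ceil_lt_add_one htk0)
  have hm2 : t_s * k ≤ m := Nat.le_ceil _
  set j := k - m with hj
  have hjr : (j:ℝ) = (k:ℝ) - m := by
    rw [hj, Nat.cast_sub hmk]
  clear_value j m
  have hα0 : 0 ≤ α := by
    rw [hα]
    have : 1 / (k:ℝ) ≤ 1 := by
      rw [div_le_one hk0]; exact_mod_cast hk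
    linarith
  have hα1 : α ≤ 1 := by
    rw [hα]
    have : 0 ≤ 1 / (k:ℝ) := by positivity
    linarith
  have hE1 : Real.exp (t_s - 1) ≤ 1 := by
    calc Real.exp (t_s - 1) ≤ Real.exp 0 := Real.exp_le_exp.2 (by linarith)
      _ = 1 := Real.exp_zero
  have hE0 : 0 < Real.exp (t_s - 1) := Real.exp_pos _
  have hET : Real.exp (-t_s) * Real.exp (t_s - 1) = Real.exp (-1) := by
    rw [← Real.exp_add]; congr 1; ring
  have h1t : (1 - t_s) * Real.exp (t_s - 1) ≤ Real.exp (-1) := by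
    have h := Real.add_one_le_exp (-t_s)
    nlinarith [Real.exp_pos (t_s - 1)]
  have h2t : (2 - t_s) * Real.exp (t_s - 1) ≤ 1 := by
    have h := Real.add_one_le_exp (1 - t_s)
    have he : Real.exp (1 - t_s) * Real.exp (t_s - 1) = 1 := by
      rw [← Real.exp_add, show (1 - t_s) + (t_s - 1) = 0 by ring, Real.exp_zero]
    nlinarith [Real.exp_pos (t_s - 1)]
  have hjk : j ≤ k := hj ▸ Nat.sub_le _ _
  have hpow_jk : α ^ k ≤ α ^ j := pow_le_pow_of_le_one hα0 hα1 hjk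
  have hpow_j1 : α ^ j ≤ α ^ (j - 1) := pow_le_pow_of_le_one hα0 hα1 (Nat.sub_le _ _)
  have hpow_pos : 0 ≤ α ^ (j - 1) := pow_nonneg hα0 _
  have hterm1 : 0 ≤ ((k:ℝ) - m) / k * α ^ (j - 1) := by
    apply mul_nonneg _ hpow_pos
    apply div_nonneg _ hk0.le
    have : (m:ℝ) ≤ k := by exact_mod_cast hmk
    linarith
  have he2 : (2:ℝ) ≤ Real.exp 1 := by
    have := Real.add_one_le_exp 1; linarith
  have hei : Real.exp (-1) * Real.exp 1 = 1 := by rw [← Real.exp_add]; norm_num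
  have heinv : Real.exp (-1) ≤ 1/2 := by
    nlinarith [Real.exp_pos (-1)]
  by_cases hk4 : k ≤ 4
  · -- crude case: LHS ≥ 0 ≥ RHS
    have hrk : (3:ℝ)/4 ≤ 3/k := by
      apply div_le_div_of_nonneg_left (by norm_num) hk0
      exact_mod_cast hk4
    have heinv4 : (1:ℝ)/4 ≤ Real.exp (-1) := by
      have he4 : Real.exp 1 < 4 := lt_trans Real.exp_one_lt_d9 (by norm_num)
      nlinarith [Real.exp_pos (-1)]
    have hrhs : (2 - t_s - Real.exp (-t_s)) * Real.exp (t_s - 1) - 3 / k ≤ 0 := by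
      have : (2 - t_s - Real.exp (-t_s)) * Real.exp (t_s - 1)
          = (2 - t_s) * Real.exp (t_s - 1) - Real.exp (-1) := by
        rw [← hET]; ring
      rw [this]; linarith
    linarith
  · -- fine case: k ≥ 5
    push_neg at hk4
    have hk5 : 5 ≤ k := hk4
    have hk5r : (5:ℝ) ≤ k := by exact_mod_cast hk5
    have hk1r : (0:ℝ) < (k:ℝ) - 1 := by linarith
    have hkne : (k:ℝ) ≠ 0 := ne_of_gt hk0
    have hk1ne : (k:ℝ) - 1 ≠ 0 := ne_of_gt hk1r
    set x : ℝ := 1 / ((k:ℝ) - 1) with hx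
    clear_value x
    have hx0 : 0 < x := by rw [hx]; positivity
    have hx1 : ((k:ℝ) - 1) * x = 1 := by rw [hx]; field_simp
    -- α ≥ exp(-x)
    have hax : α * (1 + x) = 1 := by
      rw [hα, hx]; field_simp; ring
    have hαlow : Real.exp (-x) ≤ α := by
      have h1 : x + 1 ≤ Real.exp x := Real.add_one_le_exp x
      have h2 : Real.exp (-x) * Real.exp x = 1 := by
        rw [← Real.exp_add, neg_add_cancel, Real.exp_zero]
      have h3 : Real.exp (-x) * (x + 1) ≤ Real.exp (-x) * Real.exp x :=
        mul_le_mul_of_nonneg_left h1 (Real.exp_pos (-x)).le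
      rw [h2] at h3
      have h4 : Real.exp (-x) * (1 + x) ≤ α * (1 + x) := by
        rw [hax]; linarith
      exact le_of_mul_le_mul_right h4 (by linarith)
    -- α^j ≥ exp(-(j*x))
    have hpj : Real.exp (-((j:ℝ) * x)) ≤ α ^ j := by
      calc Real.exp (-((j:ℝ) * x)) = Real.exp (-x) ^ j := by
            rw [← Real.exp_nat_mul]; congr 1; ring
        _ ≤ α ^ j := pow_le_pow_left₀ (Real.exp_pos _).le hαlow j
    -- exponent bound : (t-1) + (t-1)*x ≤ -(j*x)
    have hjle : (j:ℝ) ≤ (1 - t_s) * k := by rw [hjr]; nlinarith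
    have harg : (t_s - 1) + (t_s - 1) * x ≤ -((j:ℝ) * x) := by
      have hkey : (t_s - 1) + (t_s - 1) * x = (t_s - 1) * k * x := by
        linear_combination (1 - t_s) * hx1
      rw [hkey]
      nlinarith [mul_nonneg hx0.le (sub_nonneg.2 hjle)]
    have hαjL : Real.exp (t_s - 1) - Real.exp (-1) * x ≤ α ^ j := by
      have h5 : Real.exp ((t_s - 1) + (t_s - 1) * x) ≤ α ^ j :=
        le_trans (Real.exp_le_exp.2 harg) hpj
      have h6 : Real.exp ((t_s - 1) + (t_s - 1) * x)
          = Real.exp (t_s - 1) * Real.exp ((t_s - 1) * x) := by rw [← Real.exp_add]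
      have h7 : Real.exp (t_s - 1) * (1 + (t_s - 1) * x)
          ≤ Real.exp (t_s - 1) * Real.exp ((t_s - 1) * x) := by
        apply mul_le_mul_of_nonneg_left _ hE0.le
        have := Real.add_one_le_exp ((t_s - 1) * x)
        linarith
      have h8 : Real.exp (t_s - 1) - Real.exp (-1) * x
          ≤ Real.exp (t_s - 1) * (1 + (t_s - 1) * x) := by
        have : Real.exp (t_s - 1) * (1 + (t_s - 1) * x)
            - (Real.exp (t_s - 1) - Real.exp (-1) * x)
            = (Real.exp (-1) - (1 - t_s) * Real.exp (t_s - 1)) * x := by ring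
        nlinarith
      linarith
    -- α^k ≤ exp(-1)
    have hαk : α ^ k ≤ Real.exp (-1) := by
      have h1 : α ≤ Real.exp (-(1/(k:ℝ))) := by
        have := Real.add_one_le_exp (-(1/(k:ℝ)))
        rw [hα]; linarith
      calc α ^ k ≤ Real.exp (-(1/(k:ℝ))) ^ k := pow_le_pow_left₀ hα0 h1 k
        _ = Real.exp (-1) := by
            rw [← Real.exp_nat_mul]; congr 1; field_simp
    -- j/k lower bound
    obtain ⟨w, hw⟩ : ∃ w : ℝ, w = 1 / (k:ℝ) := ⟨_, rfl⟩
    have hw0 : 0 < w := by rw [hw]; positivity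
    have hkm0 : (0:ℝ) ≤ (k:ℝ) - m := by
      have : (m:ℝ) ≤ k := by exact_mod_cast hmk
      linarith
    have hgoal3 : (3:ℝ)/k = 3*w := by rw [hw]; ring
    have hgoalkm : ((k:ℝ) - m)/k = ((k:ℝ) - m)*w := by rw [hw]; ring
    have hjdivw : 1 - t_s - w ≤ ((k:ℝ) - m) * w := by
      have h1 : ((k:ℝ) - t_s*k - 1)*w ≤ ((k:ℝ) - m)*w :=
        mul_le_mul_of_nonneg_right (by linarith) hw0.le
      have h4 : ((k:ℝ) - t_s*k - 1)*w = 1 - t_s - w := by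
        rw [hw]; field_simp
      linarith
    have hcxw : Real.exp (-1) * x ≤ w := by
      rw [hw]
      have hxk : x ≤ 2 / (k:ℝ) := by
        rw [hx, div_le_div_iff₀ hk1r hk0]; linarith
      have h' : Real.exp (-1) * x ≤ (1/2) * (2/(k:ℝ)) :=
        mul_le_mul heinv hxk (by rw [hx]; positivity) (by norm_num)
      have h'' : (1/2) * (2/(k:ℝ)) = 1/(k:ℝ) := by ring
      linarith
    have hx0 : 0 < x := by rw [hx]; positivity
    have hcx0 : 0 ≤ Real.exp (-1) * x := mul_nonneg (Real.exp_pos _).le hx0.le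
    have hLpos : 0 ≤ Real.exp (t_s - 1) - Real.exp (-1) * x := by
      have h1 : Real.exp (-1) ≤ Real.exp (t_s - 1) := Real.exp_le_exp.2 (by linarith)
      have h2 : Real.exp (-1) * x ≤ Real.exp (-1) * (1/2) := by
        have hx2 : x ≤ 1/2 := by
          rw [hx, div_le_div_iff₀ hk1r (by norm_num : (0:ℝ) < 2)]; linarith
        exact mul_le_mul_of_nonneg_left hx2 (Real.exp_pos _).le
      nlinarith [Real.exp_pos (-1)]
    have hLle : Real.exp (t_s - 1) - Real.exp (-1) * x ≤ 1 := by linarith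
    have hrhs_eq : (2 - t_s - Real.exp (-t_s)) * Real.exp (t_s - 1)
        = (2 - t_s) * Real.exp (t_s - 1) - Real.exp (-1) := by
      rw [← hET]; ring
    rw [ge_iff_le, hrhs_eq, hgoalkm, hgoal3]
    have e5 : w * (Real.exp (t_s - 1) - Real.exp (-1) * x) ≤ w * 1 :=
      mul_le_mul_of_nonneg_left hLle hw0.le
    have e3 : (2 - t_s) * (Real.exp (-1) * x) ≤ 2 * (Real.exp (-1) * x) :=
      mul_le_mul_of_nonneg_right (by linarith) hcx0
    have hterm1w : 0 ≤ ((k:ℝ) - m) * w * α ^ (j - 1) :=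
      mul_nonneg (mul_nonneg hkm0 hw0.le) hpow_pos
    by_cases hcase : 0 ≤ 1 - t_s - w
    · -- main case
      have hprod : (1 - t_s - w) * (Real.exp (t_s - 1) - Real.exp (-1) * x)
          ≤ ((k:ℝ) - m) * w * α ^ (j - 1) :=
        mul_le_mul hjdivw (le_trans hαjL hpow_j1) hLpos (mul_nonneg hkm0 hw0.le)
      have key : (2 - t_s) * Real.exp (t_s - 1) - 3*w
          ≤ (2 - t_s - w) * (Real.exp (t_s - 1) - Real.exp (-1) * x) := by
        have expand : (2 - t_s - w) * (Real.exp (t_s - 1) - Real.exp (-1) * x)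
            = (2 - t_s) * Real.exp (t_s - 1) - (2 - t_s) * (Real.exp (-1) * x)
              - w * (Real.exp (t_s - 1) - Real.exp (-1) * x) := by ring
        have h2c : 2 * (Real.exp (-1) * x) ≤ 2 * w := by linarith
        linarith
      have e0 : (1 - t_s - w) * (Real.exp (t_s - 1) - Real.exp (-1) * x)
            + (Real.exp (t_s - 1) - Real.exp (-1) * x)
          = (2 - t_s - w) * (Real.exp (t_s - 1) - Real.exp (-1) * x) := by ring
      linarith
    · -- t close to 1
      push_neg at hcase
      have h1tk : (1 - t_s) * Real.exp (t_s - 1) ≤ w := by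
        have := mul_le_mul_of_nonneg_left hE1 (by linarith : (0:ℝ) ≤ 1 - t_s)
        linarith
      linarith [hterm1w, hαjL, hαk, hcxw, h1tk, hw0]
end

section
/- Let f be a non-negative submodular function on finite ground set N, and let S, OPT ⊆ N with |S| = |OPT| = k and S ≠ OPT. If for every u ∈ N \ S and v ∈ S the swap inequality (1 + ε/k)·f(S) ≥ f((S \ {v}) ∪ {u}) holds (for ε ∈ (0,1)), then (ε/k)·f(S) ≥ (f(S ∩ OPT) − f(S))/|S \ OPT| + (f(S ∪ OPT) − f(S))/|OPT \ S|. -/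
open Finset

lemma union_marginal {N : Type*} [DecidableEq N] (f : Finset N → ℝ)
    (hsub : ∀ S T : Finset N, f (S ∪ T) + f (S ∩ T) ≤ f S + f T)
    (S : Finset N) : ∀ T : Finset N, Disjoint S T →
      f (S ∪ T) - f S ≤ ∑ u ∈ T, (f (insert u S) - f S) := by
  intro T
  induction T using Finset.induction_on with
  | empty => simp
  | @insert a T' ha ih =>
    intro hdisj
    have haS : a ∉ S := Finset.disjoint_right.mp hdisj (mem_insert_self a T')
    have hd' : Disjoint S T' := hdisj.mono_right (subset_insert a T')
    have key := hsub (insert a S) (S ∪ T')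
    have h1 : insert a S ∪ (S ∪ T') = S ∪ insert a T' := by
      ext x
      simp only [Finset.mem_union, Finset.mem_insert]
      tauto
    have h2 : insert a S ∩ (S ∪ T') = S := by
      have haT' : a ∉ T' := ha
      ext x
      simp only [Finset.mem_inter, Finset.mem_insert, Finset.mem_union]
      constructor
      · rintro ⟨h | h, h' | h'⟩ <;> first | exact h | exact h' | (subst h; tauto)
      · tauto
    rw [h1, h2] at key
    rw [Finset.sum_insert ha]
    have := ih hd'
    linarith

lemma erase_marginal {N : Type*} [DecidableEq N] (f : Finset N → ℝ)
    (hsub : ∀ S T : Finset N, f (S ∪ T) + f (S ∩ T) ≤ f S + f T)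
    (S : Finset N) : ∀ A : Finset N, A ⊆ S →
      f (S \ A) - f S ≤ ∑ v ∈ A, (f (S.erase v) - f S) := by
  intro A
  induction A using Finset.induction_on with
  | empty => simp
  | @insert a A' ha ih =>
    intro hsubset
    have haS : a ∈ S := hsubset (mem_insert_self a A')
    have hA'S : A' ⊆ S := (subset_insert a A').trans hsubset
    have key := hsub (S.erase a) (S \ A')
    have h1 : S.erase a ∪ (S \ A') = S := by
      ext x; simp [mem_erase, mem_union, mem_sdiff]
      constructor
      · tauto
      · intro hx
        by_cases hxa : x = a
        · subst hxa; right; exact ⟨hx, ha⟩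
        · left; exact ⟨hxa, hx⟩
    have h2 : S.erase a ∩ (S \ A') = S \ insert a A' := by
      ext x; simp [mem_erase, mem_inter, mem_sdiff, mem_insert]; tauto
    rw [h1, h2] at key
    rw [Finset.sum_insert ha]
    have := ih hA'S
    linarith

theorem stmt_18 {N : Type*} [Fintype N] [DecidableEq N] (f : Finset N → ℝ)
    (hsub : ∀ S T : Finset N, f (S ∪ T) + f (S ∩ T) ≤ f S + f T)
    (hnonneg : ∀ S : Finset N, 0 ≤ f S)
    (k : ℕ) (ε : ℝ) (hε : 0 < ε ∧ ε < 1)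
    (S OPT : Finset N) (hS : S.card = k) (hOPT : OPT.card = k) (hne : S ≠ OPT)
    (hswap : ∀ u : N, u ∉ S → ∀ v ∈ S, (1 + ε / k) * f S ≥ f (insert u (S.erase v))) :
    (ε / k) * f S ≥ (f (S ∩ OPT) - f S) / ((S \ OPT).card : ℝ)
      + (f (S ∪ OPT) - f S) / ((OPT \ S).card : ℝ) := by
  set A := S \ OPT with hAdef
  set B := OPT \ S with hBdef
  -- cardinalities
  have hcardA : A.card + (S ∩ OPT).card = S.card := Finset.card_sdiff_add_card_inter S OPT
  have hcardB : B.card + (OPT ∩ S).card = OPT.card := Finset.card_sdiff_add_card_inter OPT S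
  have hinter : (OPT ∩ S).card = (S ∩ OPT).card := by rw [Finset.inter_comm]
  have hAB : A.card = B.card := by omega
  have hAne : A.Nonempty := by
    rw [Finset.nonempty_iff_ne_empty]
    intro h
    have hsub' : S ⊆ OPT := by rwa [← Finset.sdiff_eq_empty_iff_subset]
    exact hne (Finset.eq_of_subset_of_card_le hsub' (by omega))
  have hm : 0 < (A.card : ℝ) := by exact_mod_cast Finset.card_pos.mpr hAne
  set m : ℝ := (A.card : ℝ) with hmdef
  -- pair inequality
  have hpair : ∀ u ∈ B, ∀ v ∈ A,
      (f (insert u S) - f S) + (f (S.erase v) - f S) ≤ (ε / k) * f S := by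
    intro u hu v hv
    have huS : u ∉ S := (Finset.mem_sdiff.mp hu).2
    have hvS : v ∈ S := (Finset.mem_sdiff.mp hv).1
    have key := hsub (insert u (S.erase v)) S
    have h1 : insert u (S.erase v) ∪ S = insert u S := by
      ext x
      simp only [Finset.mem_union, Finset.mem_insert, Finset.mem_erase]
      by_cases hxv : x = v <;> subst_eqs <;> tauto
    have h2 : insert u (S.erase v) ∩ S = S.erase v := by
      ext x
      simp only [Finset.mem_inter, Finset.mem_insert, Finset.mem_erase]
      constructor
      · rintro ⟨h | h, h'⟩
        · subst h; exact absurd h' huS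
        · exact h
      · intro h; exact ⟨Or.inr h, h.2⟩
    rw [h1, h2] at key
    have hsw := hswap u huS v hvS
    linarith
  set D1 : ℝ := ∑ u ∈ B, (f (insert u S) - f S) with hD1
  set D2 : ℝ := ∑ v ∈ A, (f (S.erase v) - f S) with hD2
  -- sum over v for each fixed structure
  have hsum : m * D1 + m * D2 ≤ m * m * ((ε / k) * f S) := by
    have step : ∀ v ∈ A, D1 + m * (f (S.erase v) - f S) ≤ m * ((ε / k) * f S) := by
      intro v hv
      have := Finset.sum_le_sum (fun u hu => hpair u hu v hv)
      rw [Finset.sum_add_distrib, Finset.sum_const, Finset.sum_const] at this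
      rw [← hAB] at this
      simpa [hD1, nsmul_eq_mul, hmdef] using this
    have := Finset.sum_le_sum step
    rw [Finset.sum_add_distrib, Finset.sum_const, ← Finset.mul_sum] at this
    simpa [nsmul_eq_mul, hmdef, hD2, mul_assoc] using this
  have hsum' : D1 + D2 ≤ m * ((ε / k) * f S) := by
    nlinarith [hm]
  -- marginal bounds
  have hB1 : f (S ∪ OPT) - f S ≤ D1 := by
    have hdisj : Disjoint S B := Finset.disjoint_sdiff
    have h1 : S ∪ B = S ∪ OPT := by
      ext x
      simp only [hBdef, Finset.mem_union, Finset.mem_sdiff]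
      tauto
    have := union_marginal f hsub S B hdisj
    rw [h1] at this
    exact this
  have hB2 : f (S ∩ OPT) - f S ≤ D2 := by
    have hsubA : A ⊆ S := Finset.sdiff_subset
    have h1 : S \ A = S ∩ OPT := by
      ext x
      simp only [hAdef, Finset.mem_sdiff, Finset.mem_inter]
      tauto
    have := erase_marginal f hsub S A hsubA
    rw [h1] at this
    exact this
  -- finish
  have hBcast : ((B.card : ℝ)) = m := by rw [hmdef]; exact_mod_cast congrArg Nat.cast hAB.symm
  rw [ge_iff_le, hBcast]
  rw [← add_div, div_le_iff₀ hm]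
  nlinarith [hm]
end
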